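/- Let X be a set of cardinality κ = |X|, and suppose there exists a {0,1}-valued probability measure on (X, 2^X) that vanishes on singletons and is κ-additive (i.e., κ is two-valued measurable). Then there exists a {0,1}-valued, singleton-vanishing, κ-additive probability measure μ on (X, 2^X) with the following homogeneity property: for every function f from the finite subsets of X to ℝ, there exists U ⊆ X with μ(U) = 1 such that for every n ∈ ℕ there is a constant C_n ∈ ℝ with f(W) = C_n for every n-element subset W of U. -/

import Mathlib

open scoped ENNReal

universe u

/-- A probability measure defined on *all* subsets of `X`: a countably additive
function `m : 2^X → [0,1]` with `m ∅ = 0` and `m X = 1`. -/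
structure TotalMeasure (X : Type u) : Type u where
  m : Set X → ℝ≥0∞
  m_empty : m ∅ = 0
  m_univ : m Set.univ = 1
  m_iUnion : ∀ A : ℕ → Set X, Pairwise (Function.onFun Disjoint A) →
    m (⋃ i, A i) = ∑' i, m (A i)

namespace TotalMeasure
variable {Z : Type u} (ν : TotalMeasure Z)

theorem m_union {A B : Set Z} (h : Disjoint A B) : ν.m (A ∪ B) = ν.m A + ν.m B := by
  have := ν.m_iUnion (fun n => if n = 0 then A else if n = 1 then B else ∅) ?_
  · have hU : (⋃ i, (fun n => if n = 0 then A else if n = 1 then B else ∅) i) = A ∪ B := by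
      apply Set.Subset.antisymm
      · refine Set.iUnion_subset fun i => ?_
        rcases i with _|_|i <;> simp
      · intro x hx
        rcases hx with hx | hx
        · exact Set.mem_iUnion.2 ⟨0, by simpa using hx⟩
        · exact Set.mem_iUnion.2 ⟨1, by simpa using hx⟩
    rw [hU] at this
    rw [this]
    rw [tsum_eq_sum (s := {0, 1}) (by intro n hn; rcases n with _|_|n <;> simp_all [ν.m_empty])]
    simp [ν.m_empty]
  · intro i j hij
    rcases i with _|_|i <;> rcases j with _|_|j <;>
      simp_all [Function.onFun, h, h.symm, disjoint_bot_left, disjoint_bot_right]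

theorem m_mono {A B : Set Z} (h : A ⊆ B) : ν.m A ≤ ν.m B := by
  have : ν.m B = ν.m A + ν.m (B \ A) := by
    rw [← ν.m_union (disjoint_sdiff_self_right.mono_left le_rfl), Set.union_diff_cancel h]
  rw [this]; exact le_self_add

theorem m_le_one (A : Set Z) : ν.m A ≤ 1 := by
  simpa [ν.m_univ] using ν.m_mono (Set.subset_univ A)

theorem m_compl_add (A : Set Z) : ν.m A + ν.m Aᶜ = 1 := by
  rw [← ν.m_union disjoint_compl_right, Set.union_compl_self, ν.m_univ]

theorem m_iUnion_null (A : ℕ → Set Z) (h : ∀ n, ν.m (A n) = 0) : ν.m (⋃ n, A n) = 0 := by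
  have hd := disjoint_disjointed A
  have := ν.m_iUnion (disjointed A) hd
  rw [← iUnion_disjointed, this]
  have : ∀ n, ν.m (disjointed A n) = 0 := fun n =>
    le_antisymm (by rw [← h n]; exact ν.m_mono (disjointed_le A n)) zero_le
  simp [this]

theorem m_subset_null {A B : Set Z} (h : A ⊆ B) (hB : ν.m B = 0) : ν.m A = 0 :=
  le_antisymm (hB ▸ ν.m_mono h) zero_le

end TotalMeasure

theorem TotalMeasure.m_union_le {Z : Type u} (ν : TotalMeasure Z) (A B : Set Z) :
    ν.m (A ∪ B) ≤ ν.m A + ν.m B := by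
  rw [← Set.union_diff_self, ν.m_union disjoint_sdiff_self_right]
  exact add_le_add_right (ν.m_mono Set.diff_subset) _

section Two
variable {Z : Type u} (ν : TotalMeasure Z)

theorem m_compl_one {A : Set Z} (h : ν.m A = 0) : ν.m Aᶜ = 1 := by
  have := ν.m_compl_add A; rw [h, zero_add] at this; exact this

theorem m_compl_zero {A : Set Z} (h : ν.m A = 1) : ν.m Aᶜ = 0 := by
  have := ν.m_compl_add A; rw [h] at this
  exact (ENNReal.add_right_inj (a := 1) ENNReal.one_ne_top).mp (by rw [add_zero]; exact this)

theorem m_one_of_compl_zero {A : Set Z} (h : ν.m Aᶜ = 0) : ν.m A = 1 := by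
  have := m_compl_one ν h; rwa [compl_compl] at this

theorem m_inter_one {A B : Set Z} (hA : ν.m A = 1) (hB : ν.m B = 1) :
    ν.m (A ∩ B) = 1 := by
  apply m_one_of_compl_zero
  rw [Set.compl_inter]
  have := ν.m_union_le Aᶜ Bᶜ
  rw [m_compl_zero ν hA, m_compl_zero ν hB, add_zero] at this
  exact le_antisymm this zero_le

theorem m_iInter_one {ι : Type*} [Countable ι] (S : ι → Set Z)
    (h : ∀ i, ν.m (S i) = 1) : ν.m (⋂ i, S i) = 1 := by
  apply m_one_of_compl_zero
  rw [Set.compl_iInter]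
  cases isEmpty_or_nonempty ι with
  | inl hempty =>
    rw [Set.iUnion_of_empty]
    exact ν.m_empty
  | inr hne =>
    obtain ⟨f, hf⟩ := exists_surjective_nat ι
    rw [← hf.iUnion_comp (fun i => (S i)ᶜ)]
    exact ν.m_iUnion_null _ (fun n => m_compl_zero ν (h (f n)))

theorem m_one_nonempty {A : Set Z} (h : ν.m A = 1) : A.Nonempty := by
  rcases A.eq_empty_or_nonempty with rfl | h'
  · rw [ν.m_empty] at h; exact absurd h (by simp)
  · exact h'

end Two

section Complete
variable {Y : Type u} (ν : TotalMeasure Y)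
  (hadd : ∀ (ι : Type u) (A : ι → Set Y), Cardinal.mk ι < Cardinal.mk Y →
    Pairwise (Function.onFun Disjoint A) →
    ν.m (⋃ i, A i) = ⨆ F : Finset ι, ∑ i ∈ F, ν.m (A i))
  (hsing : ∀ x : Y, ν.m {x} = 0)

include hadd hsing in
theorem m_small_null (S : Set Y) (hS : Cardinal.mk S < Cardinal.mk Y) : ν.m S = 0 := by
  have hU : (⋃ i : S, ({(i : Y)} : Set Y)) = S := Set.iUnion_of_singleton_coe S
  have hd : Pairwise (Function.onFun Disjoint (fun i : S => ({(i : Y)} : Set Y))) := by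
    intro i j hij
    simp only [Function.onFun, Set.disjoint_singleton]
    exact fun h => hij (Subtype.ext h)
  have := hadd S (fun i : S => ({(i : Y)} : Set Y)) hS hd
  rw [hU] at this
  rw [this]
  simp [hsing]

include hadd in
theorem exists_fiber_one (htv : ∀ A : Set Y, ν.m A = 0 ∨ ν.m A = 1)
    (ι : Type u) (hι : Cardinal.mk ι < Cardinal.mk Y) (c : Y → ι) (B : Set Y)
    (hB : ν.m B = 1) : ∃ i, ν.m {y ∈ B | c y = i} = 1 := by
  by_contra hcon
  push_neg at hcon
  have hnull : ∀ i, ν.m {y ∈ B | c y = i} = 0 := fun i =>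
    (htv _).resolve_right (hcon i)
  have hd : Pairwise (Function.onFun Disjoint (fun i : ι => {y ∈ B | c y = i})) := by
    intro i j hij
    simp only [Function.onFun, Set.disjoint_left]
    rintro y ⟨-, rfl⟩ ⟨-, h2⟩
    exact hij h2
  have hU : (⋃ i : ι, {y ∈ B | c y = i}) = B := by
    ext y; simp
  have := hadd ι _ hι hd
  rw [hU, hB] at this
  have : (1 : ℝ≥0∞) = 0 := by
    rw [this]
    simp [hnull]
  simp at this

end Complete

theorem exists_real_const {Y : Type u} (ν : TotalMeasure Y)
    (htv : ∀ A : Set Y, ν.m A = 0 ∨ ν.m A = 1) (h : Y → ℝ) :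
    ∃ c : ℝ, ν.m {y | h y = c} = 1 := by
  set S : ℚ → Set Y := fun q => if ν.m {y | h y < (q : ℝ)} = 1
    then {y | h y < (q : ℝ)} else {y | h y < (q : ℝ)}ᶜ with hSdef
  have hS : ∀ q, ν.m (S q) = 1 := by
    intro q
    rw [hSdef]
    by_cases hq : ν.m {y | h y < (q : ℝ)} = 1
    · simp [hq]
    · have := (htv {y | h y < (q : ℝ)}).resolve_right hq
      simp [hq, m_compl_one ν this]
  have hT : ν.m (⋂ q, S q) = 1 := m_iInter_one ν S hS
  obtain ⟨y₀, hy₀⟩ := m_one_nonempty ν hT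
  refine ⟨h y₀, ?_⟩
  have hsub : (⋂ q, S q) ⊆ {y | h y = h y₀} := by
    intro y hy
    have key : ∀ q : ℚ, h y < q ↔ h y₀ < q := by
      intro q
      have h1 : y ∈ S q := Set.mem_iInter.mp hy q
      have h2 : y₀ ∈ S q := Set.mem_iInter.mp hy₀ q
      rw [hSdef] at h1 h2
      by_cases hq : ν.m {y | h y < (q : ℝ)} = 1
      · simp only [hq, if_pos] at h1 h2
        exact iff_of_true h1 h2
      · simp only [hq, if_neg, not_false_iff, Set.mem_compl_iff, Set.mem_setOf_eq] at h1 h2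
        exact iff_of_false h1 h2
    show h y = h y₀
    by_contra hne
    rcases lt_or_gt_of_ne hne with hlt | hlt
    · obtain ⟨q, hq1, hq2⟩ := exists_rat_btwn hlt
      exact absurd ((key q).mp hq1) (not_lt.mpr hq2.le)
    · obtain ⟨q, hq1, hq2⟩ := exists_rat_btwn hlt
      exact absurd ((key q).mpr hq1) (not_lt.mpr hq2.le)
  exact le_antisymm (ν.m_le_one _) (hT ▸ ν.m_mono hsub)

/-- Pushforward of a total measure along a map. -/
def TotalMeasure.map {Y Z : Type u} (ν : TotalMeasure Y) (g : Y → Z) : TotalMeasure Z where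
  m S := ν.m (g ⁻¹' S)
  m_empty := by simp [ν.m_empty]
  m_univ := by simp [ν.m_univ]
  m_iUnion A hA := by
    show ν.m (g ⁻¹' ⋃ i, A i) = _
    rw [Set.preimage_iUnion]
    exact ν.m_iUnion _ fun i j hij => (hA hij).preimage g

@[simp] theorem TotalMeasure.map_m {Y Z : Type u} (ν : TotalMeasure Y) (g : Y → Z) (S : Set Z) :
    (ν.map g).m S = ν.m (g ⁻¹' S) := rfl

theorem TotalMeasure.map_two {Y Z : Type u} (ν : TotalMeasure Y) (g : Y → Z)
    (htv : ∀ A : Set Y, ν.m A = 0 ∨ ν.m A = 1) :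
    ∀ A : Set Z, (ν.map g).m A = 0 ∨ (ν.map g).m A = 1 := fun A => htv _

theorem TotalMeasure.map_add {Y Z : Type u} (ν : TotalMeasure Y) (g : Y → Z) (κ : Cardinal.{u})
    (hadd : ∀ (ι : Type u) (A : ι → Set Y), Cardinal.mk ι < κ →
      Pairwise (Function.onFun Disjoint A) →
      ν.m (⋃ i, A i) = ⨆ F : Finset ι, ∑ i ∈ F, ν.m (A i)) :
    ∀ (ι : Type u) (A : ι → Set Z), Cardinal.mk ι < κ →
      Pairwise (Function.onFun Disjoint A) →
      (ν.map g).m (⋃ i, A i) = ⨆ F : Finset ι, ∑ i ∈ F, (ν.map g).m (A i) := by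
  intro ι A hι hA
  simp only [TotalMeasure.map_m, Set.preimage_iUnion]
  exact hadd ι _ hι fun i j hij => (hA hij).preimage g

/-- `g` is "unbounded and non-constant" w.r.t. the measure. -/
def Unb {Y : Type u} [LT Y] (ν : TotalMeasure Y) (g : Y → Y) : Prop :=
  (∀ γ : Y, ν.m {y | g y = γ} = 0) ∧ (∀ γ : Y, ν.m {y | g y < γ} = 0)

section Minimal
variable {Y : Type u} [LinearOrder Y] [WellFoundedLT Y] (ν : TotalMeasure Y)

theorem exists_minimal_unb
    (hsing : ∀ x : Y, ν.m {x} = 0)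
    (hseg : ∀ x : Y, Cardinal.mk {y : Y // y < x} < Cardinal.mk Y)
    (hadd : ∀ (ι : Type u) (A : ι → Set Y), Cardinal.mk ι < Cardinal.mk Y →
      Pairwise (Function.onFun Disjoint A) →
      ν.m (⋃ i, A i) = ⨆ F : Finset ι, ∑ i ∈ F, ν.m (A i)) :
    ∃ g : Y → Y, Unb ν g ∧ ∀ h : Y → Y, Unb ν h → ν.m {y | h y < g y} ≠ 1 := by
  have hid : Unb ν id := by
    constructor
    · intro γ
      have : {y : Y | id y = γ} = {γ} := by ext y; simp [eq_comm]
      rw [this]; exact hsing γ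
    · intro γ
      apply m_small_null ν hadd hsing
      have : ({y | id y < γ} : Set Y) = {y | y < γ} := rfl
      rw [this]
      exact hseg γ
  by_contra hcon
  push_neg at hcon
  have step : ∀ g : Y → Y, Unb ν g → ∃ h : Y → Y, Unb ν h ∧ ν.m {y | h y < g y} = 1 := by
    intro g hg
    obtain ⟨h, hh, hne⟩ := hcon g hg
    exact ⟨h, hh, hne⟩
  -- build a descending sequence
  let seq : ℕ → {g : Y → Y // Unb ν g} := fun n =>
    Nat.rec ⟨id, hid⟩ (fun _ p => ⟨(step p.1 p.2).choose, (step p.1 p.2).choose_spec.1⟩) n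
  have hseq : ∀ n, ν.m {y | (seq (n+1)).1 y < (seq n).1 y} = 1 := fun n =>
    (step (seq n).1 (seq n).2).choose_spec.2
  have hint : ν.m (⋂ n, {y | (seq (n+1)).1 y < (seq n).1 y}) = 1 :=
    m_iInter_one ν _ hseq
  obtain ⟨y, hy⟩ := m_one_nonempty ν hint
  have hdesc : ∀ n, (seq (n+1)).1 y < (seq n).1 y := fun n => Set.mem_iInter.mp hy n
  exact (RelEmbedding.wellFounded_iff_isEmpty.mp
    (wellFounded_lt (α := Y))).elim' (RelEmbedding.natGT (fun n => (seq n).1 y) hdesc)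

end Minimal

section Normal
variable {Y : Type u} [LinearOrder Y] [WellFoundedLT Y] (ν : TotalMeasure Y)
  (htv : ∀ A : Set Y, ν.m A = 0 ∨ ν.m A = 1)
  (hadd : ∀ (ι : Type u) (A : ι → Set Y), Cardinal.mk ι < Cardinal.mk Y →
    Pairwise (Function.onFun Disjoint A) →
    ν.m (⋃ i, A i) = ⨆ F : Finset ι, ∑ i ∈ F, ν.m (A i))
  (hseg : ∀ x : Y, Cardinal.mk {y : Y // y < x} < Cardinal.mk Y)
  (g : Y → Y) (hg : Unb ν g)
  (hmin : ∀ h : Y → Y, Unb ν h → ν.m {y | h y < g y} ≠ 1)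

include htv hadd hseg hg hmin in
theorem normal_of_minimal (F : Y → Y) (hF : ν.m (g ⁻¹' {x | F x < x}) = 1) :
    ∃ γ : Y, ν.m (g ⁻¹' {x | F x = γ}) = 1 := by
  set h : Y → Y := fun y => F (g y) with hh
  by_cases hc : ∃ γ, ν.m {y | h y = γ} = 1
  · obtain ⟨γ, hγ⟩ := hc
    exact ⟨γ, hγ⟩
  push_neg at hc
  by_cases hb : ∃ γ, ν.m {y | h y < γ} = 1
  · obtain ⟨γ, hγ⟩ := hb
    -- split the measure-one set {y | h y < γ} into fibers of h, indexed by {z // z < γ}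
    obtain ⟨y₁, hy₁⟩ := m_one_nonempty ν hγ
    have hne : Nonempty {z : Y // z < γ} := ⟨⟨h y₁, hy₁⟩⟩
    set c : Y → {z : Y // z < γ} := fun y =>
      if hy : h y < γ then ⟨h y, hy⟩ else hne.some with hcdef
    obtain ⟨i, hi⟩ := exists_fiber_one ν hadd htv _ (hseg γ) c _ hγ
    refine ⟨i.1, ?_⟩
    have hsub : {y ∈ {y | h y < γ} | c y = i} ⊆ {y | h y = i.1} := by
      rintro y ⟨hy1, hy2⟩
      have hy1' : h y < γ := hy1
      simp only [hcdef] at hy2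
      rw [dif_pos hy1'] at hy2
      show h y = i.1
      exact congrArg Subtype.val hy2
    have := ν.m_mono hsub
    rw [hi] at this
    exact le_antisymm (ν.m_le_one _) this
  push_neg at hb
  exfalso
  apply hmin h
  · constructor
    · intro γ; exact (htv _).resolve_right (hc γ)
    · intro γ; exact (htv _).resolve_right (hb γ)
  · exact hF

include htv hadd hseg hg hmin in
theorem diag_of_minimal (A : Y → Set Y) (hA : ∀ α, ν.m (g ⁻¹' (A α)) = 1) :
    ν.m (g ⁻¹' {β | ∀ α < β, β ∈ A α}) = 1 := by
  by_contra hcon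
  have h0 : ν.m (g ⁻¹' {β | ∀ α < β, β ∈ A α}) = 0 := (htv _).resolve_right hcon
  have h1 : ν.m (g ⁻¹' {β | ∀ α < β, β ∈ A α})ᶜ = 1 := m_compl_one ν h0
  rw [← Set.preimage_compl] at h1
  classical
  set F : Y → Y := fun β => if hβ : ∃ α, α < β ∧ β ∉ A α then hβ.choose else β with hFdef
  have hreg : ν.m (g ⁻¹' {x | F x < x}) = 1 := by
    refine le_antisymm (ν.m_le_one _) ?_
    rw [← h1]
    apply ν.m_mono
    apply Set.preimage_mono
    intro β hβ
    simp only [Set.mem_compl_iff, Set.mem_setOf_eq, not_forall] at hβ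
    obtain ⟨α, hα, hβα⟩ := hβ
    have hex : ∃ α, α < β ∧ β ∉ A α := ⟨α, hα, hβα⟩
    show F β < β
    simp only [hFdef]
    rw [dif_pos hex]
    exact hex.choose_spec.1
  obtain ⟨γ, hγ⟩ := normal_of_minimal ν htv hadd hseg g hg hmin F hreg
  have hint := m_inter_one ν hγ h1
  have hsub : g ⁻¹' {x | F x = γ} ∩ g ⁻¹' {β | ∀ α < β, β ∈ A α}ᶜ ⊆ g ⁻¹' (A γ)ᶜ := by
    rintro y ⟨hy1, hy2⟩
    simp only [Set.mem_preimage, Set.mem_setOf_eq] at hy1 hy2 ⊢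
    simp only [Set.mem_compl_iff, Set.mem_setOf_eq, not_forall] at hy2
    obtain ⟨α, hα, hβα⟩ := hy2
    have hex : ∃ α, α < g y ∧ g y ∉ A α := ⟨α, hα, hβα⟩
    simp only [hFdef] at hy1
    rw [dif_pos hex] at hy1
    have := hex.choose_spec.2
    rw [hy1] at this
    exact this
  have hAc : ν.m (g ⁻¹' (A γ)ᶜ) = 1 := by
    have := ν.m_mono hsub
    rw [hint] at this
    exact le_antisymm (ν.m_le_one _) this
  have := m_compl_zero ν (hA γ)
  rw [← Set.preimage_compl] at this
  rw [this] at hAc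
  simp at hAc

end Normal

section Rowbottom
variable {Y : Type u} [LinearOrder Y] (μ : TotalMeasure Y)
  (htv : ∀ A : Set Y, μ.m A = 0 ∨ μ.m A = 1)
  (hdiag : ∀ A : Y → Set Y, (∀ α, μ.m (A α) = 1) → μ.m {β | ∀ α < β, β ∈ A α} = 1)

include htv hdiag in
theorem rowbottom (n : ℕ) (f : Finset Y → ℝ) :
    ∃ A : Set Y, μ.m A = 1 ∧ ∃ c : ℝ, ∀ W : Finset Y, ↑W ⊆ A → W.card = n → f W = c := by
  induction n generalizing f with
  | zero =>
    refine ⟨Set.univ, μ.m_univ, f ∅, ?_⟩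
    intro W _ hW
    rw [Finset.card_eq_zero.mp hW]
  | succ n ih =>
    choose A hA c hc using fun α : Y => ih (fun W => f (insert α W))
    obtain ⟨c₀, hc₀⟩ := exists_real_const μ htv c
    have hΔ : μ.m {β | ∀ α < β, β ∈ A α} = 1 := hdiag A hA
    refine ⟨{α | c α = c₀} ∩ {β | ∀ α < β, β ∈ A α}, m_inter_one μ hc₀ hΔ, c₀, ?_⟩
    intro W hWsub hWcard
    have hne : W.Nonempty := Finset.card_pos.mp (by omega)
    set α := W.min' hne with hα
    have hαW : α ∈ W := W.min'_mem hne
    have hαA : α ∈ ({α | c α = c₀} ∩ {β | ∀ α < β, β ∈ A α} : Set Y) := hWsub hαW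
    set W' := W.erase α with hW'
    have hcard' : W'.card = n := by
      rw [hW', Finset.card_erase_of_mem hαW, hWcard]; rfl
    have hsub' : ↑W' ⊆ A α := by
      intro β hβ
      have hβW' : β ∈ W' := hβ
      have hβW : β ∈ W := Finset.mem_of_mem_erase hβW'
      have hβne : β ≠ α := Finset.ne_of_mem_erase hβW'
      have hαβ : α < β := lt_of_le_of_ne (W.min'_le β hβW) (Ne.symm hβne)
      exact (hWsub hβW).2 α hαβ
    have := hc α W' hsub' hcard'
    rw [Finset.insert_erase hαW] at this
    rw [this, hαA.1]
end Rowbottom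


/-- If the cardinality `κ = |X|` is two-valued measurable (there is a `{0,1}`-valued,
singleton-vanishing, `κ`-additive probability measure on `(X, 2^X)`), then there is such
a measure `μ` which is moreover *normal*: for every `f : [X]^{<ω} → ℝ` there is a set
`U` of `μ`-measure one that is homogeneous for `f`. -/
theorem exists_homogeneous_two_valued_measure {X : Type u}
    (hex : ∃ μ₀ : TotalMeasure X,
      (∀ A : Set X, μ₀.m A = 0 ∨ μ₀.m A = 1) ∧
      (∀ x : X, μ₀.m {x} = 0) ∧
      (∀ (ι : Type u) (A : ι → Set X), Cardinal.mk ι < Cardinal.mk X →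
        Pairwise (Function.onFun Disjoint A) →
        μ₀.m (⋃ i, A i) = ⨆ F : Finset ι, ∑ i ∈ F, μ₀.m (A i))) :
    ∃ μ : TotalMeasure X,
      (∀ A : Set X, μ.m A = 0 ∨ μ.m A = 1) ∧
      (∀ x : X, μ.m {x} = 0) ∧
      (∀ (ι : Type u) (A : ι → Set X), Cardinal.mk ι < Cardinal.mk X →
        Pairwise (Function.onFun Disjoint A) →
        μ.m (⋃ i, A i) = ⨆ F : Finset ι, ∑ i ∈ F, μ.m (A i)) ∧
      (∀ f : Finset X → ℝ, ∃ U : Set X, μ.m U = 1 ∧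
        ∀ n : ℕ, ∃ C : ℝ, ∀ W : Finset X, ↑W ⊆ U → W.card = n → f W = C) := by
  obtain ⟨μ₀, h0tv, h0sing, h0add⟩ := hex
  set κ := Cardinal.mk X with hκ
  let Y : Type u := κ.ord.ToType
  have hYcard : Cardinal.mk Y = κ := by
    rw [Cardinal.mk_toType, Cardinal.card_ord]
  obtain ⟨e⟩ : Nonempty (X ≃ Y) := Cardinal.eq.mp hYcard.symm
  set μ₁ := μ₀.map e with hμ₁
  have h1tv := μ₀.map_two e h0tv
  have h1add : ∀ (ι : Type u) (A : ι → Set Y), Cardinal.mk ι < Cardinal.mk Y →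
      Pairwise (Function.onFun Disjoint A) →
      μ₁.m (⋃ i, A i) = ⨆ F : Finset ι, ∑ i ∈ F, μ₁.m (A i) :=
    fun ι A hι => μ₀.map_add e κ h0add ι A (hYcard ▸ hι)
  have h1sing : ∀ y : Y, μ₁.m {y} = 0 := by
    intro y
    show μ₀.m (e ⁻¹' {y}) = 0
    have : e ⁻¹' {y} = {e.symm y} := by
      rw [← Equiv.image_symm_eq_preimage, Set.image_singleton]
    rw [this]; exact h0sing _
  have hseg : ∀ x : Y, Cardinal.mk {y : Y // y < x} < Cardinal.mk Y := by
    intro x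
    haveI : IsWellOrder Y (· < ·) := isWellOrder_lt
    have h1 := Ordinal.typein_lt_self (o := κ.ord) x
    have h2 : Cardinal.mk {y : Y // y < x} =
        (Ordinal.typein ((· < ·) : Y → Y → Prop) x).card := Ordinal.card_typein (r := ((· < ·) : Y → Y → Prop)) x
    rw [hYcard, h2]
    exact Cardinal.lt_ord.mp h1
  obtain ⟨g, hg, hmin⟩ := exists_minimal_unb μ₁ h1sing hseg h1add
  set μ₂ := μ₁.map g with hμ₂
  have h2tv := μ₁.map_two g h1tv
  have h2diag : ∀ A : Y → Set Y, (∀ α, μ₂.m (A α) = 1) →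
      μ₂.m {β | ∀ α < β, β ∈ A α} = 1 :=
    fun A hA => diag_of_minimal μ₁ h1tv h1add hseg g hg hmin A hA
  refine ⟨μ₂.map e.symm, (μ₂.map_two e.symm h2tv), ?_, ?_, ?_⟩
  · intro x
    show μ₂.m (e.symm ⁻¹' {x}) = 0
    have h1 : (e.symm ⁻¹' {x} : Set Y) = {e x} := by
      rw [← Equiv.image_symm_eq_preimage]
      simp
    rw [h1]
    show μ₁.m (g ⁻¹' {e x}) = 0
    have h2 : (g ⁻¹' {e x} : Set Y) = {y | g y = e x} := rfl
    rw [h2]; exact hg.1 (e x)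
  · intro ι A hι hA
    exact μ₂.map_add e.symm κ (μ₁.map_add g κ (fun ι' A' hι' => h1add ι' A' (by rw [hYcard]; exact hι'))) ι A hι hA
  · intro f
    set f' : Finset Y → ℝ := fun W => f (W.map e.symm.toEmbedding) with hf'
    choose A hA c hcs using fun n => rowbottom μ₂ h2tv h2diag n f'
    refine ⟨e ⁻¹' ⋂ n, A n, ?_, ?_⟩
    · show μ₂.m (e.symm ⁻¹' (e ⁻¹' ⋂ n, A n)) = 1
      have h1 : e.symm ⁻¹' (e ⁻¹' ⋂ n, A n) = ⋂ n, A n := by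
        ext y; simp
      rw [h1]
      exact m_iInter_one μ₂ A hA
    · intro n
      refine ⟨c n, ?_⟩
      intro W hWU hWc
      have h1 : ↑(W.map e.toEmbedding) ⊆ A n := by
        intro y hy
        simp only [Finset.coe_map, Set.mem_image, Finset.mem_coe] at hy
        obtain ⟨x, hxW, rfl⟩ := hy
        have := hWU hxW
        simp only [Set.mem_preimage, Set.mem_iInter] at this
        exact this n
      have h2 : (W.map e.toEmbedding).card = n := by
        rw [Finset.card_map]; exact hWc
      have h3 := hcs n (W.map e.toEmbedding) h1 h2
      have h4 : (W.map e.toEmbedding).map e.symm.toEmbedding = W := by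
        ext x
        simp [Finset.mem_map]
      rw [hf'] at h3
      simp only [h4] at h3
      exact h3
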